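/- Let S be a free ℤ-module of finite rank with a symmetric bilinear form ⟨·,·⟩ : S × S → ℤ, and let Δ := {d ∈ S : ⟨d,d⟩ = −2}. Let δ ∈ Δ, and let κ ∈ S ⊗ ℝ satisfy ⟨κ,δ⟩ = 0 and ⟨κ,d⟩ ≠ 0 for every d ∈ Δ \ {δ, −δ}. Set Δ⁺_κ := {d ∈ Δ : ⟨κ,d⟩ > 0} and Δ₁⁺ := Δ⁺_κ ∪ {δ}. Then: (a) Δ is the disjoint union of Δ⁺_κ, −Δ⁺_κ and {δ, −δ}; (b) whenever d₁, …, d_m ∈ Δ₁⁺ and n₁, …, n_m are nonnegative integers such that d := n₁d₁ + ⋯ + n_m d_m lies in Δ, one has d ∈ Δ₁⁺; and the same closure property (b) holds for Δ₂⁺ := Δ⁺_κ ∪ {−δ}. -/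
import Mathlib


open scoped TensorProduct

/-- Lemma 2.2 (root-partition form): for a lattice `S` with roots
`Δ = {d | ⟨d,d⟩ = -2}`, an element `κ ∈ S ⊗ ℝ` orthogonal to a root `δ` but to no
other root gives a partition of `Δ`, and `Δ₁⁺ = Δ⁺_κ ∪ {δ}`, `Δ₂⁺ = Δ⁺_κ ∪ {-δ}`
satisfy the positivity condition (P1). -/
theorem stmt_1
    (S : Type) [AddCommGroup S] [Module ℤ S] [Module.Free ℤ S] [Module.Finite ℤ S]
    (B : S →ₗ[ℤ] S →ₗ[ℤ] ℤ) (hB : ∀ x y : S, B x y = B y x)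
    (Bℝ : (ℝ ⊗[ℤ] S) →ₗ[ℝ] (ℝ ⊗[ℤ] S) →ₗ[ℝ] ℝ)
    (hBℝ : ∀ x y : S, Bℝ ((1 : ℝ) ⊗ₜ[ℤ] x) ((1 : ℝ) ⊗ₜ[ℤ] y) = (B x y : ℝ))
    (Δ : Set S) (hΔ : Δ = {d : S | B d d = -2})
    (δ : S) (hδ : δ ∈ Δ)
    (κ : ℝ ⊗[ℤ] S)
    (pair : S → ℝ) (hpair : ∀ d : S, pair d = Bℝ κ ((1 : ℝ) ⊗ₜ[ℤ] d))
    (hκδ : pair δ = 0)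
    (hκd : ∀ d ∈ Δ, d ≠ δ → d ≠ -δ → pair d ≠ 0)
    (Δplus : Set S) (hΔplus : Δplus = {d ∈ Δ | 0 < pair d})
    (Δ₁ Δ₂ : Set S) (hΔ₁ : Δ₁ = Δplus ∪ {δ}) (hΔ₂ : Δ₂ = Δplus ∪ {-δ}) :
    (Δ = Δplus ∪ -Δplus ∪ {δ, -δ} ∧
      Disjoint Δplus (-Δplus) ∧ Disjoint Δplus ({δ, -δ} : Set S) ∧
      Disjoint (-Δplus) ({δ, -δ} : Set S)) ∧
    (∀ (m : ℕ) (d : Fin m → S) (n : Fin m → ℕ),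
      (∀ i, d i ∈ Δ₁) → (∑ i, (n i : ℤ) • d i) ∈ Δ → (∑ i, (n i : ℤ) • d i) ∈ Δ₁) ∧
    (∀ (m : ℕ) (d : Fin m → S) (n : Fin m → ℕ),
      (∀ i, d i ∈ Δ₂) → (∑ i, (n i : ℤ) • d i) ∈ Δ → (∑ i, (n i : ℤ) • d i) ∈ Δ₂) := by
  classical
  -- `pair` as an additive hom
  let P : S →+ ℝ := AddMonoidHom.mk' (fun x => Bℝ κ ((1 : ℝ) ⊗ₜ[ℤ] x))
    (by intro x y; simp [TensorProduct.tmul_add])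
  have hP : ∀ x : S, pair x = P x := fun x => hpair x
  have hneg : ∀ x : S, pair (-x) = - pair x := by
    intro x; rw [hP, hP, map_neg]
  have hsmulR : ∀ (k : ℤ) (x : S), pair (k • x) = (k : ℝ) * pair x := by
    intro k x; rw [hP, hP, map_zsmul]; simp
  have hpsum : ∀ (m : ℕ) (d : Fin m → S) (n : Fin m → ℕ),
      pair (∑ i, (n i : ℤ) • d i) = ∑ i, (n i : ℝ) * pair (d i) := by
    intro m d n
    rw [hP, map_sum]
    refine Finset.sum_congr rfl fun i _ => ?_
    rw [map_zsmul]; rw [hP]; simp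
  -- negation preserves Δ
  have hΔneg : ∀ x : S, x ∈ Δ → -x ∈ Δ := by
    intro x hx
    rw [hΔ] at hx ⊢
    simpa using hx
  have hmδ : -δ ∈ Δ := hΔneg δ hδ
  have hpmδ : pair (-δ) = 0 := by rw [hneg, hκδ, neg_zero]
  -- the key closure lemma, for a root e with pair e = 0
  have key : ∀ e : S, e ∈ Δ → pair e = 0 →
      ∀ (m : ℕ) (d : Fin m → S) (n : Fin m → ℕ),
        (∀ i, d i ∈ Δplus ∪ {e}) → (∑ i, (n i : ℤ) • d i) ∈ Δ →
        (∑ i, (n i : ℤ) • d i) ∈ Δplus ∪ {e} := by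
    intro e heΔ he m d n hd hsΔ
    have hterm : ∀ i : Fin m, 0 ≤ (n i : ℝ) * pair (d i) := by
      intro i
      rcases hd i with hi | hi
      · rw [hΔplus] at hi
        exact mul_nonneg (by positivity) (le_of_lt hi.2)
      · simp only [Set.mem_singleton_iff] at hi
        rw [hi, he, mul_zero]
    have hpv : pair (∑ i, (n i : ℤ) • d i) = ∑ i, (n i : ℝ) * pair (d i) :=
      hpsum m d n
    rcases eq_or_lt_of_le (Finset.sum_nonneg fun i _ => hterm i) with h0 | hpos
    · -- pair of the sum is 0 : each term vanishes, sum is a multiple of e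
      right
      have hz : ∀ i ∈ Finset.univ, (n i : ℝ) * pair (d i) = 0 := by
        rw [← Finset.sum_eq_zero_iff_of_nonneg fun i _ => hterm i]
        exact h0.symm
      have hde : ∀ i : Fin m, (n i : ℤ) • d i = (n i : ℤ) • e := by
        intro i
        rcases hd i with hi | hi
        · rw [hΔplus] at hi
          have : (n i : ℝ) = 0 := by
            have := hz i (Finset.mem_univ i)
            rcases mul_eq_zero.mp this with h | h
            · exact h
            · exact absurd h (ne_of_gt hi.2)
          have hn0 : n i = 0 := by exact_mod_cast this
          simp [hn0]
        · simp only [Set.mem_singleton_iff] at hi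
          rw [hi]
      have hveq : (∑ i, (n i : ℤ) • d i) = (∑ i, (n i : ℤ)) • e := by
        rw [Finset.sum_congr rfl fun i _ => hde i]
        exact (map_sum (AddMonoidHom.mk' (fun c : ℤ => c • e) fun a b => add_zsmul e a b)
          (fun i => (n i : ℤ)) Finset.univ).symm
      set k : ℤ := ∑ i, (n i : ℤ) with hk
      have hknn : 0 ≤ k := Finset.sum_nonneg fun i _ => Int.ofNat_nonneg _
      have hBe : B e e = -2 := by rw [hΔ] at heΔ; exact heΔ
      have hBv : B ((∑ i, (n i : ℤ) • d i)) ((∑ i, (n i : ℤ) • d i)) = -2 := by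
        rw [hΔ] at hsΔ; exact hsΔ
      rw [hveq] at hBv
      have hkk : k * k * (-2) = -2 := by
        have : B (k • e) (k • e) = k * (k * B e e) := by
          simp [map_smul, smul_eq_mul]
        rw [this, hBe] at hBv
        linarith
      have hk1 : k = 1 := by nlinarith
      rw [hveq, hk1]
      simp
    · -- pair of the sum is positive
      left
      rw [hΔplus]
      exact ⟨hsΔ, by rw [hpv]; exact hpos⟩
  refine ⟨⟨?_, ?_, ?_, ?_⟩, ?_, ?_⟩
  · -- partition
    ext x
    constructor
    · intro hx
      rcases lt_trichotomy (pair x) 0 with h | h | h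
      · left; right
        rw [Set.mem_neg, hΔplus]
        exact ⟨hΔneg x hx, by rw [hneg]; linarith⟩
      · right
        by_cases h1 : x = δ
        · exact Or.inl h1
        by_cases h2 : x = -δ
        · exact Or.inr h2
        · exact absurd h (hκd x hx h1 h2)
      · left; left
        rw [hΔplus]; exact ⟨hx, h⟩
    · intro hx
      rcases hx with (hx | hx) | hx
      · rw [hΔplus] at hx; exact hx.1
      · rw [Set.mem_neg, hΔplus] at hx
        have := hΔneg _ hx.1
        simpa using this
      · rcases hx with h | h
        · rw [h]; exact hδ
        · rw [h]; exact hmδ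
  · -- Δplus disjoint from -Δplus
    rw [Set.disjoint_left]
    intro x hx hx'
    rw [hΔplus] at hx
    rw [Set.mem_neg, hΔplus] at hx'
    have := hx'.2
    rw [hneg] at this
    linarith [hx.2]
  · rw [Set.disjoint_left]
    intro x hx hx'
    rw [hΔplus] at hx
    rcases hx' with h | h
    · rw [h] at hx; linarith [hx.2, hκδ]
    · rw [h] at hx; linarith [hx.2, hpmδ]
  · rw [Set.disjoint_left]
    intro x hx hx'
    rw [Set.mem_neg, hΔplus] at hx
    have hx2 := hx.2
    rw [hneg] at hx2
    rcases hx' with h | h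
    · rw [h] at hx2; linarith [hκδ]
    · rw [h] at hx2; rw [hneg, hκδ] at hx2; linarith
  · intro m d n hd hs
    rw [hΔ₁] at hd ⊢
    exact key δ hδ hκδ m d n hd hs
  · intro m d n hd hs
    rw [hΔ₂] at hd ⊢
    exact key (-δ) hmδ hpmδ m d n hd hs
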